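/- arXiv:1305.1439 — 2 statements merged into one kernel-verified Lean document; each statement's English description precedes it below -/
import Mathlib

section
/- In the timed DES setting, the set of controllable sublanguages of a given language F is closed under arbitrary (nonempty, and even empty) unions: if {F_i}_{i∈I} is a family of languages each controllable with respect to G, then ⋃_{i∈I} F_i is controllable with respect to G. -/
/-- Prefix closure of a language. -/
def pr {α : Type*} (L : Set (List α)) : Set (List α) := {s | ∃ t ∈ L, s <+: t}

/-- Eligible events after string `s` in language `L`. -/
def Elig {α : Type*} (L : Set (List α)) (s : List α) : Set α := {σ | s ++ [σ] ∈ L}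

/-- TDES controllability of `F` w.r.t. plant closed language `LG`. -/
def controllable {α : Type*} (Su Sfor : Set α) (tick : α)
    (LG F : Set (List α)) : Prop :=
  ∀ s ∈ pr F,
    (Elig (pr F) s ∩ Sfor = ∅ → Elig LG s ∩ (Su ∪ {tick}) ⊆ Elig (pr F) s) ∧
    (Elig (pr F) s ∩ Sfor ≠ ∅ → Elig LG s ∩ Su ⊆ Elig (pr F) s)

lemma pr_iUnion {α ι : Type*} (F : ι → Set (List α)) :
    pr (⋃ i, F i) = ⋃ i, pr (F i) := by
  ext s
  simp [pr]
  tauto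

lemma elig_mono {α : Type*} {A B : Set (List α)} (h : A ⊆ B) (s : List α) :
    Elig A s ⊆ Elig B s := fun σ hσ => h hσ

/-- controllable languages are closed under arbitrary unions. -/
theorem controllable_iUnion {α : Type*} {ι : Type*} (Su Sfor : Set α) (tick : α)
    (LG : Set (List α)) (hLG : LG = pr LG) (F : ι → Set (List α))
    (hsub : ∀ i, F i ⊆ LG)
    (hctrl : ∀ i, controllable Su Sfor tick LG (F i)) :
    controllable Su Sfor tick LG (⋃ i, F i) := by
  intro s hs
  rw [pr_iUnion] at hs ⊢
  obtain ⟨i, hi⟩ := Set.mem_iUnion.mp hs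
  have hsubElig : ∀ j, Elig (pr (F j)) s ⊆ Elig (⋃ j, pr (F j)) s :=
    fun j => elig_mono (Set.subset_iUnion (fun k => pr (F k)) j) s
  constructor
  · intro hemp
    have hempi : Elig (pr (F i)) s ∩ Sfor = ∅ := by
      apply Set.eq_empty_of_subset_empty
      rw [← hemp]
      exact Set.inter_subset_inter_left _ (hsubElig i)
    exact ((hctrl i s hi).1 hempi).trans (hsubElig i)
  · intro hne
    obtain ⟨σ, hσ⟩ := Set.nonempty_iff_ne_empty.mpr hne
    obtain ⟨j, hj⟩ := Set.mem_iUnion.mp hσ.1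
    have hsj : s ∈ pr (F j) := by
      obtain ⟨t, ht, hp⟩ := hj
      exact ⟨t, ht, (List.prefix_append s [σ]).trans hp⟩
    have hnej : Elig (pr (F j)) s ∩ Sfor ≠ ∅ :=
      Set.nonempty_iff_ne_empty.mp ⟨σ, hj, hσ.2⟩
    exact ((hctrl j s hsj).2 hnej).trans (hsubElig j)
end

section
/- L_m(SUP) ⊆ P_α⁻¹(L_m(LOC^P_α)) for every forcible event α: every marked string of the monolithic supervisor projects into the marked language of the local preemptor constructed from any preemption cover. -/
/-- Extended (partial) transition function on strings. -/
def step {X E : Type*} (xi : X → E → Option X) : X → List E → Option X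
  | x, [] => some x
  | x, σ :: s => (xi x σ).bind (fun y => step xi y s)

/-- Natural projection onto the subalphabet satisfying `p`. -/
def natProj {E : Type*} (p : E → Prop) [DecidablePred p] (s : List E) : List E :=
  s.filter (fun a => decide (p a))

/-- L_m(SUP) ⊆ P_α⁻¹(L_m(LOC^P_α)): every marked string of the
monolithic supervisor projects into the marked language of the local preemptor
constructed from a preemption cover.  Here `ζ'` is the induced transition
function on the cells of the cover, events outside Σ_α are selfloops of `ζ'`,
and the local marked cells are those meeting X_m. -/
theorem Lm_SUP_subset_proj_Lm_LOC {X E I : Type*} (xi : X → E → Option X)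
    (x0 : X) (Xm : Set X) (C : I → Set X)
    (hne : ∀ i, (C i).Nonempty) (hcov : ∀ x : X, ∃ i, x ∈ C i)
    (ζ : I → E → Option I)
    -- induced transition function: correspondence with SUP's transitions
    (hζ : ∀ i σ j, ζ i σ = some j →
      (∃ x ∈ C i, ∃ y, xi x σ = some y ∧ y ∈ C j) ∧
      (∀ x' ∈ C i, ∀ y, xi x' σ = some y → y ∈ C j))
    -- ζ is defined wherever some state in the cell makes the transition
    (hdef : ∀ i σ, (∃ x ∈ C i, (xi x σ).isSome) → (ζ i σ).isSome)
    (Sa : Set E) [DecidablePred (· ∈ Sa)] (tick a : E)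
    (hta : a ∈ Sa ∧ tick ∈ Sa)
    -- events outside Σ_α are only selfloops of ζ'
    (hself : ∀ σ ∉ Sa, ∀ i j, ζ i σ = some j → j = i)
    (i0 : I) (hi0 : x0 ∈ C i0) :
    ∀ s : List E, (∃ x, step xi x0 s = some x ∧ x ∈ Xm) →
      ∃ i, step ζ i0 (natProj (· ∈ Sa) s) = some i ∧ (C i ∩ Xm).Nonempty := by
  have key : ∀ (s : List E) (x0 : X) (i0 : I), x0 ∈ C i0 →
      ∀ x, step xi x0 s = some x →
      ∃ i, step ζ i0 (natProj (· ∈ Sa) s) = some i ∧ x ∈ C i := by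
    intro s
    induction s with
    | nil =>
      intro x0 i0 h0 x hx
      simp [step] at hx
      exact ⟨i0, by simp [natProj, step], hx ▸ h0⟩
    | cons σ s ih =>
      intro x0 i0 h0 x hx
      simp only [step] at hx
      cases hy : xi x0 σ with
      | none => rw [hy] at hx; simp at hx
      | some y =>
        rw [hy] at hx; simp at hx
        have hdefσ := hdef i0 σ ⟨x0, h0, by rw [hy]; exact rfl⟩
        cases hj : ζ i0 σ with
        | none => rw [hj] at hdefσ; simp at hdefσ
        | some j =>
          have hyj : y ∈ C j := (hζ i0 σ j hj).2 x0 h0 y hy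
          by_cases hσ : σ ∈ Sa
          · obtain ⟨i, hi, hxi⟩ := ih y j hyj x hx
            refine ⟨i, ?_, hxi⟩
            simp [natProj, hσ, step, hj]
            simpa [natProj] using hi
          · have hji : j = i0 := hself σ hσ i0 j hj
            obtain ⟨i, hi, hxi⟩ := ih y j hyj x hx
            rw [hji] at hi
            refine ⟨i, ?_, hxi⟩
            simpa [natProj, hσ] using hi
  rintro s ⟨x, hx, hxm⟩
  obtain ⟨i, hi, hxi⟩ := key s x0 i0 hi0 x hx
  exact ⟨i, hi, x, hxi, hxm⟩
end
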